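/- Work in ℝ^{1+3} = ℝ × ℝ³ with the future causal cone C := {(t,ξ) ∈ ℝ × ℝ³ : ‖ξ‖ ≤ t}, where ‖·‖ is the Euclidean norm. Call a continuous curve γ : [0,1] → ℝ^{1+3} future-directed causal if γ(t) − γ(s) ∈ C whenever 0 ≤ s ≤ t ≤ 1. Let Ω ⊆ ℝ^{1+3} be open, let p, q ∈ Ω, and let K be the union of the images of all future-directed causal curves γ : [0,1] → Ω with γ(0) = p and γ(1) = q. Assume K ≠ ∅ and that there exists δ > 0 such that the open ball of radius δ around every point of K is contained in Ω. Then every future-directed causal curve γ : [0,1] → ℝ^{1+3} with γ(0) = p and γ(1) = q takes values in Ω; consequently, K equals the full Minkowski causal diamond, i.e., the union of the images of all future-directed causal curves in ℝ^{1+3} from p to q. -/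

import Mathlib

open Set

/-- Minkowski space `ℝ^{1+3} = ℝ × ℝ³`. -/
abbrev Mink : Type := ℝ × EuclideanSpace ℝ (Fin 3)

/-- A continuous curve `γ : [0,1] → ℝ^{1+3}` is future-directed causal if
`γ t − γ s` lies in the future causal cone `{(t,ξ) : ‖ξ‖ ≤ t}` whenever `s ≤ t`. -/
def IsFDCausal (γ : ℝ → Mink) : Prop :=
  ContinuousOn γ (Icc 0 1) ∧
    ∀ s ∈ Icc (0:ℝ) 1, ∀ t ∈ Icc (0:ℝ) 1, s ≤ t → ‖(γ t - γ s).2‖ ≤ (γ t - γ s).1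

/-- The union of the images of all future-directed causal curves from `p` to `q`
taking values in `Ω`. -/
def causalDiamondIn (Ω : Set Mink) (p q : Mink) : Set Mink :=
  {x | ∃ γ : ℝ → Mink, IsFDCausal γ ∧ γ 0 = p ∧ γ 1 = q ∧
        (∀ t ∈ Icc (0:ℝ) 1, γ t ∈ Ω) ∧ ∃ t ∈ Icc (0:ℝ) 1, γ t = x}

/-- Convex interpolation of two future-directed causal curves is causal. -/
lemma interp_causal {γ₀ γ : ℝ → Mink} (h₀ : IsFDCausal γ₀) (h : IsFDCausal γ)
    {l : ℝ} (hl0 : 0 ≤ l) (hl1 : l ≤ 1) :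
    IsFDCausal (fun t => (1 - l) • γ₀ t + l • γ t) := by
  constructor
  · exact (h₀.1.const_smul (1 - l)).add (h.1.const_smul l)
  · intro s hs t ht hst
    have key : ((1 - l) • γ₀ t + l • γ t) - ((1 - l) • γ₀ s + l • γ s)
        = (1 - l) • (γ₀ t - γ₀ s) + l • (γ t - γ s) := by module
    simp only [key]
    have h1 := h₀.2 s hs t ht hst
    have h2 := h.2 s hs t ht hst
    have e1 : ((1 - l) • (γ₀ t - γ₀ s) + l • (γ t - γ s)).1
        = (1 - l) * (γ₀ t - γ₀ s).1 + l * (γ t - γ s).1 := rfl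
    have e2 : ((1 - l) • (γ₀ t - γ₀ s) + l • (γ t - γ s)).2
        = (1 - l) • (γ₀ t - γ₀ s).2 + l • (γ t - γ s).2 := rfl
    rw [e1, e2]
    calc ‖(1 - l) • (γ₀ t - γ₀ s).2 + l • (γ t - γ s).2‖
        ≤ ‖(1 - l) • (γ₀ t - γ₀ s).2‖ + ‖l • (γ t - γ s).2‖ := norm_add_le _ _
      _ = (1 - l) * ‖(γ₀ t - γ₀ s).2‖ + l * ‖(γ t - γ s).2‖ := by
          rw [norm_smul, norm_smul, Real.norm_eq_abs, Real.norm_eq_abs,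
            abs_of_nonneg (by linarith), abs_of_nonneg hl0]
      _ ≤ (1 - l) * (γ₀ t - γ₀ s).1 + l * (γ t - γ s).1 := by
          have H1 := mul_le_mul_of_nonneg_left h1 (by linarith : (0:ℝ) ≤ 1 - l)
          have H2 := mul_le_mul_of_nonneg_left h2 hl0
          linarith

/-- Let `Ω ⊆ ℝ^{1+3}` be open, `p, q ∈ Ω`, and let `K` be the union of
images of future-directed causal curves from `p` to `q` inside `Ω`.  If `K ≠ ∅` and some
`δ`-neighbourhood of `K` is contained in `Ω`, then every future-directed causal curve
from `p` to `q` in `ℝ^{1+3}` takes values in `Ω`; consequently `K` equals the full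
Minkowski causal diamond of `p` and `q`. -/
theorem stmt_10 (Ω : Set Mink) (hΩ : IsOpen Ω) (p q : Mink) (hp : p ∈ Ω) (hq : q ∈ Ω)
    (hne : (causalDiamondIn Ω p q).Nonempty)
    (hδ : ∃ δ > (0:ℝ), ∀ x ∈ causalDiamondIn Ω p q, Metric.ball x δ ⊆ Ω) :
    (∀ γ : ℝ → Mink, IsFDCausal γ → γ 0 = p → γ 1 = q → ∀ t ∈ Icc (0:ℝ) 1, γ t ∈ Ω) ∧
      causalDiamondIn Ω p q = causalDiamondIn Set.univ p q := by
  obtain ⟨x₀, γ₀, hγ₀, hγ₀0, hγ₀1, hγ₀Ω, -⟩ := hne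
  obtain ⟨δ, hδ0, hδK⟩ := hδ
  have main : ∀ γ : ℝ → Mink, IsFDCausal γ → γ 0 = p → γ 1 = q →
      ∀ t ∈ Icc (0:ℝ) 1, γ t ∈ Ω := by
    intro γ hγ hγ0 hγ1
    obtain ⟨M, hM⟩ := isCompact_Icc.exists_bound_of_continuousOn
      (f := fun t => γ t - γ₀ t) (hγ.1.sub hγ₀.1)
    have hM0 : (0:ℝ) ≤ M := le_trans (norm_nonneg _) (hM 0 (by norm_num))
    set ε := δ / (2 * (M + 1)) with hεdef
    have hε0 : 0 < ε := by positivity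
    set Γ : ℝ → ℝ → Mink := fun l t => (1 - l) • γ₀ t + l • γ t with hΓ
    have hstep : ∀ l ∈ Icc (0:ℝ) 1, (∀ t ∈ Icc (0:ℝ) 1, Γ l t ∈ Ω) →
        ∀ l' ∈ Icc (0:ℝ) 1, |l' - l| ≤ ε → ∀ t ∈ Icc (0:ℝ) 1, Γ l' t ∈ Ω := by
      intro l hl hlΩ l' hl' hll' t ht
      have hK : Γ l t ∈ causalDiamondIn Ω p q := by
        refine ⟨Γ l, interp_causal hγ₀ hγ hl.1 hl.2, ?_, ?_, hlΩ, t, ht, rfl⟩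
        · show (1 - l) • γ₀ 0 + l • γ 0 = p
          rw [hγ₀0, hγ0]; module
        · show (1 - l) • γ₀ 1 + l • γ 1 = q
          rw [hγ₀1, hγ1]; module
      apply hδK _ hK
      have hdiff : Γ l' t - Γ l t = (l' - l) • (γ t - γ₀ t) := by
        show ((1 - l') • γ₀ t + l' • γ t) - ((1 - l) • γ₀ t + l • γ t)
            = (l' - l) • (γ t - γ₀ t)
        module
      rw [Metric.mem_ball, dist_eq_norm, hdiff, norm_smul, Real.norm_eq_abs]
      have hb : |l' - l| * ‖γ t - γ₀ t‖ ≤ ε * M :=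
        mul_le_mul hll' (hM t ht) (norm_nonneg _) (le_of_lt hε0)
      have : ε * M < δ := by
        rw [hεdef]
        rw [div_mul_eq_mul_div, div_lt_iff₀ (by positivity)]
        nlinarith
      linarith
    have hind : ∀ n : ℕ, ∀ l ∈ Icc (0:ℝ) 1, l ≤ n * ε →
        ∀ t ∈ Icc (0:ℝ) 1, Γ l t ∈ Ω := by
      intro n
      induction n with
      | zero =>
        intro l hl hln t ht
        have hl0 : l = 0 := le_antisymm (by simpa using hln) hl.1
        subst hl0
        have hΓ0 : Γ 0 t = γ₀ t := by
          show (1 - (0:ℝ)) • γ₀ t + (0:ℝ) • γ t = γ₀ t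
          module
        rw [hΓ0]; exact hγ₀Ω t ht
      | succ n ih =>
        intro l hl hln
        by_cases hcase : l ≤ n * ε
        · exact ih l hl hcase
        · push_neg at hcase
          set l' := max (l - ε) 0 with hl'def
          have hnε : (0:ℝ) ≤ n * ε := by positivity
          have hl'mem : l' ∈ Icc (0:ℝ) 1 :=
            ⟨le_max_right _ _, max_le (by linarith [hl.2]) (by norm_num)⟩
          have hl'le : l' ≤ n * ε := by
            apply max_le _ hnε
            have : l ≤ (n + 1) * ε := by push_cast at hln; linarith
            linarith
          have hl'l : l' ≤ l := max_le (by linarith) hl.1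
          have habs : |l - l'| ≤ ε := by
            rw [abs_le]
            constructor
            · linarith
            · have : l - ε ≤ l' := le_max_left _ _
              linarith
          exact hstep l' hl'mem (ih l' hl'mem hl'le) l hl habs
    obtain ⟨n, hn⟩ := exists_nat_ge (1 / ε)
    have h1n : (1:ℝ) ≤ n * ε := by
      rw [div_le_iff₀ hε0] at hn
      linarith
    intro t ht
    have := hind n 1 ⟨by norm_num, le_refl 1⟩ h1n t ht
    have hΓ1 : Γ 1 t = γ t := by
      show (1 - (1:ℝ)) • γ₀ t + (1:ℝ) • γ t = γ t
      module
    rwa [hΓ1] at this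
  refine ⟨main, ?_⟩
  ext x
  constructor
  · rintro ⟨γ, h, h0, h1, -, hx⟩
    exact ⟨γ, h, h0, h1, fun t _ => mem_univ _, hx⟩
  · rintro ⟨γ, h, h0, h1, -, hx⟩
    exact ⟨γ, h, h0, h1, main γ h h0 h1, hx⟩
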